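/- For any positive integers ℓ and m with m ≤ ℓ, the sum over all m-tuples of positive integers (f_1,...,f_m) with f_1 + ... + f_m = ℓ of the multinomial coefficient ℓ!/(f_1!...f_m!) times f_1^(f_1 - 1) * ... * f_m^(f_m - 1) equals m! * C(ℓ-1, m-1) * ℓ^(ℓ-m). -/

import Mathlib

open Polynomial Finset

noncomputable section



/-- Abel element `z (z+n)^{n-1}`, with value 1 at `n = 0`. -/
def ab {R : Type*} [CommRing R] (n : ℕ) (z : R) : R :=
  if n = 0 then 1 else z * (z + (n : R)) ^ (n - 1)

@[simp] lemma ab_zero {R : Type*} [CommRing R] (z : R) : ab 0 z = 1 := rfl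

lemma ab_succ {R : Type*} [CommRing R] (n : ℕ) (z : R) :
    ab (n + 1) z = z * (z + ((n : R) + 1)) ^ n := by
  simp [ab]

lemma map_ab {R S : Type*} [CommRing R] [CommRing S] (φ : R →+* S) (n : ℕ) (z : R) :
    φ (ab n z) = ab n (φ z) := by
  cases n with
  | zero => simp
  | succ n => simp [ab_succ]

@[simp] lemma ab_apply_zero {R : Type*} [CommRing R] (n : ℕ) :
    ab n (0 : R) = if n = 0 then 1 else 0 := by
  cases n with
  | zero => simp
  | succ n => simp [ab_succ]

/-- derivative of the Abel polynomial-like expression. -/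
lemma derivative_ab {R : Type*} [CommRing R] (n : ℕ) (p : R[X]) (hp : derivative p = 1) :
    derivative (ab n p) = (n : R[X]) * ab (n - 1) (p + 1) := by
  cases n with
  | zero => simp
  | succ n =>
    cases n with
    | zero => simp [ab_succ, hp]
    | succ n =>
      rw [ab_succ, derivative_mul, hp, derivative_pow, derivative_add, hp]
      simp only [derivative_add, derivative_natCast, derivative_one, hp, Nat.add_sub_cancel, ab_succ]
      push_cast [map_add, map_one, Polynomial.C_eq_natCast]
      rw [pow_succ]
      ring


/-- Abel's binomial identity. -/
lemma abel (n : ℕ) (c : ℚ) :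
    ab n ((X : ℚ[X]) + C c)
      = ∑ k ∈ range (n + 1), C ((n.choose k : ℚ) * ab (n - k) c) * ab k X := by
  induction n with
  | zero => simp [ab_zero]
  | succ n ih =>
    set L : ℚ[X] := ab (n + 1) ((X : ℚ[X]) + C c) with hL
    set R : ℚ[X] := ∑ k ∈ range (n + 1 + 1),
      C (((n + 1).choose k : ℚ) * ab (n + 1 - k) c) * ab k X with hR
    have hder : derivative (L - R) = 0 := by
      have hdL : derivative L = ((n : ℚ[X]) + 1) * ab n ((X : ℚ[X]) + C c + 1) := by
        rw [hL, derivative_ab (n + 1) _ (by simp)]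
        push_cast
        simp
      have hdR : derivative R = ((n : ℚ[X]) + 1) * ab n ((X : ℚ[X]) + C c + 1) := by
        rw [hR, derivative_sum]
        have hterm : ∀ k, derivative (C (((n + 1).choose k : ℚ) * ab (n + 1 - k) c) * ab k X)
            = C (((n + 1).choose k : ℚ) * ab (n + 1 - k) c) * ((k : ℚ[X]) * ab (k - 1) (X + 1)) := by
          intro k
          rw [derivative_C_mul, derivative_ab k X (by simp)]
        simp only [hterm]
        rw [Finset.sum_range_succ']
        simp only [Nat.cast_zero, zero_mul, mul_zero, add_zero, Nat.add_sub_cancel]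
        have hcoef : ∀ k, C (((n + 1).choose (k + 1) : ℚ) * ab (n + 1 - (k + 1)) c)
              * (((k : ℚ[X]) + 1) * ab k (X + 1))
            = ((n : ℚ[X]) + 1) * (C ((n.choose k : ℚ) * ab (n - k) c) * ab k (X + 1)) := by
          intro k
          have hnat : ((n + 1).choose (k + 1) : ℚ) * ((k : ℚ) + 1) = ((n : ℚ) + 1) * n.choose k := by
            have := Nat.add_one_mul_choose_eq n k
            have := congrArg (Nat.cast (R := ℚ)) this
            push_cast at this
            linarith [this]
          have : n + 1 - (k + 1) = n - k := by omega
          rw [this]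
          rw [show (C (((n + 1).choose (k + 1) : ℚ) * ab (n - k) c)) =
            C ((n + 1).choose (k + 1) : ℚ) * C (ab (n - k) c) from by rw [map_mul]]
          rw [show (C ((n.choose k : ℚ) * ab (n - k) c)) =
            C (n.choose k : ℚ) * C (ab (n - k) c) from by rw [map_mul]]
          have hcast : (C (((n + 1).choose (k + 1) : ℚ)) * ((k : ℚ[X]) + 1))
              = ((n : ℚ[X]) + 1) * C (n.choose k : ℚ) := by
            have h2 : ((n : ℚ[X]) + 1) * ((n.choose k : ℕ) : ℚ[X])
                = (((n + 1).choose (k + 1) : ℕ) : ℚ[X]) * ((k : ℚ[X]) + 1) := by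
              exact_mod_cast congrArg (Nat.cast : ℕ → ℚ[X]) (Nat.add_one_mul_choose_eq n k)
            simp only [Polynomial.C_eq_natCast]
            exact h2.symm
          calc C (((n + 1).choose (k + 1) : ℚ)) * C (ab (n - k) c) * (((k : ℚ[X]) + 1) * ab k (X + 1))
              = (C (((n + 1).choose (k + 1) : ℚ)) * ((k : ℚ[X]) + 1)) * (C (ab (n - k) c) * ab k (X + 1)) := by ring
            _ = (((n : ℚ[X]) + 1) * C (n.choose k : ℚ)) * (C (ab (n - k) c) * ab k (X + 1)) := by rw [hcast]
            _ = _ := by ring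
        simp only [Nat.cast_add, Nat.cast_one] at hcoef ⊢
        rw [Finset.sum_congr rfl (fun k _ => hcoef k), ← Finset.mul_sum]
        congr 1
        -- shifted induction hypothesis
        have hφ := congrArg (Polynomial.eval₂RingHom Polynomial.C ((X : ℚ[X]) + 1)) ih
        simp only [map_sum, map_mul, map_ab, coe_eval₂RingHom, eval₂_add, eval₂_X, eval₂_C] at hφ
        simp only [map_mul, map_ab]
        rw [← hφ]
        congr 1
        ring
      rw [derivative_sub, hdL, hdR, sub_self]
    have h0 : (L - R).eval 0 = 0 := by
      have hevL : L.eval 0 = ab (n + 1) c := by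
        have := map_ab (Polynomial.evalRingHom (0 : ℚ)) (n + 1) ((X : ℚ[X]) + C c)
        simp only [coe_evalRingHom, eval_add, eval_X, eval_C, zero_add] at this
        exact this
      have hevR : R.eval 0 = ab (n + 1) c := by
        rw [hR, Polynomial.eval_finset_sum]
        have : ∀ k, (C (((n + 1).choose k : ℚ) * ab (n + 1 - k) c) * ab k X).eval 0
            = ((n + 1).choose k : ℚ) * ab (n + 1 - k) c * (if k = 0 then 1 else 0) := by
          intro k
          rw [eval_mul, eval_C]
          congr 1
          have := map_ab (Polynomial.evalRingHom (0 : ℚ)) k (X : ℚ[X])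
          simp only [coe_evalRingHom, eval_X] at this
          rw [this, ab_apply_zero]
        simp only [this, mul_ite, mul_one, mul_zero]
        rw [Finset.sum_ite_eq' (range (n + 1 + 1)) 0]
        simp [ab_zero]
      rw [eval_sub, hevL, hevR, sub_self]
    have hC := Polynomial.eq_C_of_derivative_eq_zero hder
    rw [Polynomial.coeff_zero_eq_eval_zero, h0, map_zero, sub_eq_zero] at hC
    exact hC


/-- weight `k^{k-1}` (written via `ab`): `tq 0 = 0`. -/
def tq (k : ℕ) : ℚ := k * ab (k - 1) (1 : ℚ)

lemma abel_deriv (n : ℕ) (c : ℚ) :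
    ∑ k ∈ range (n + 1), (n.choose k : ℚ) * tq k * ab (n - k) c
      = (n : ℚ) * ab (n - 1) (c + 1) := by
  have h := congrArg derivative (abel n c)
  have hterm : ∀ k : ℕ, derivative (C ((n.choose k : ℚ) * ab (n - k) c) * ab k X)
      = C ((n.choose k : ℚ) * ab (n - k) c) * ((k : ℚ[X]) * ab (k - 1) (X + 1)) := by
    intro k
    rw [derivative_C_mul, derivative_ab k X (by simp)]
  rw [derivative_ab n _ (by simp), derivative_sum] at h
  simp only [hterm] at h
  have h2 := congrArg (Polynomial.evalRingHom (0 : ℚ)) h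
  simp only [coe_evalRingHom, map_mul, map_sum, map_natCast, map_ab, eval_add, eval_X, eval_C,
    eval_one, zero_add] at h2
  rw [h2,]
  apply Finset.sum_congr rfl
  intro k _
  simp only [tq]
  ring

section tri
variable {M : Type*} [AddCommMonoid M]

lemma range_sub_sum (N a : ℕ) (ha : a ≤ N) (G : ℕ → M) :
    ∑ x ∈ range (N + 1 - a), G x = ∑ x ∈ range (N + 1), if x + a ≤ N then G x else 0 := by
  rw [← Finset.sum_filter]
  apply Finset.sum_congr _ (fun _ _ => rfl)
  ext x
  simp only [Finset.mem_filter, Finset.mem_range]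
  omega

lemma tri1 (N : ℕ) (F : ℕ → ℕ → M) :
    ∑ j ∈ range (N + 1), ∑ k ∈ range (N + 1 - j), F j k
      = ∑ k ∈ range (N + 1), ∑ j ∈ range (N + 1 - k), F j k := by
  have hcomm : ∀ j k : ℕ, (if k + j ≤ N then F j k else 0) = (if j + k ≤ N then F j k else 0) := by
    intro j k; rw [Nat.add_comm]
  calc ∑ j ∈ range (N + 1), ∑ k ∈ range (N + 1 - j), F j k
      = ∑ j ∈ range (N + 1), ∑ k ∈ range (N + 1), if k + j ≤ N then F j k else 0 :=
        Finset.sum_congr rfl fun j hj =>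
          range_sub_sum N j (by simpa [Nat.lt_succ_iff] using hj) _
    _ = ∑ k ∈ range (N + 1), ∑ j ∈ range (N + 1), if j + k ≤ N then F j k else 0 := by
        rw [Finset.sum_comm]
        exact Finset.sum_congr rfl fun k _ => Finset.sum_congr rfl fun j _ => hcomm j k
    _ = ∑ k ∈ range (N + 1), ∑ j ∈ range (N + 1 - k), F j k :=
        (Finset.sum_congr rfl fun k hk =>
          (range_sub_sum N k (by simpa [Nat.lt_succ_iff] using hk) _)).symm

lemma tri2 (N : ℕ) (F : ℕ → ℕ → M) :
    ∑ k ∈ range (N + 1), ∑ j ∈ range (k + 1), F j k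
      = ∑ j ∈ range (N + 1), ∑ i ∈ range (N + 1 - j), F j (j + i) := by
  have h1 : ∀ k, k ∈ range (N + 1) → ∑ j ∈ range (k + 1), F j k
      = ∑ j ∈ range (N + 1), if j ≤ k then F j k else 0 := by
    intro k hk
    rw [← Finset.sum_filter]
    apply Finset.sum_congr _ (fun _ _ => rfl)
    ext x
    simp only [Finset.mem_filter, Finset.mem_range, Finset.mem_range] at hk ⊢
    omega
  rw [Finset.sum_congr rfl h1, Finset.sum_comm]
  apply Finset.sum_congr rfl
  intro j hj
  have h2 : ∑ k ∈ range (N + 1), (if j ≤ k then F j k else 0) = ∑ k ∈ Ico j (N + 1), F j k := by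
    rw [← Finset.sum_filter]
    apply Finset.sum_congr _ (fun _ _ => rfl)
    ext x
    simp only [Finset.mem_filter, Finset.mem_range, Finset.mem_Ico]
    omega
  rw [h2, Finset.sum_Ico_eq_sum_range]
end tri


@[simp] lemma tq_zero : tq 0 = 0 := by simp [tq]

lemma choose_swap {n j k : ℕ} (h : j + k ≤ n) :
    n.choose j * (n - j).choose k = n.choose k * (n - k).choose j := by
  have e1 := Nat.choose_mul (n := n) (k := j + k) (s := j) (Nat.le_add_right j k)
  have e2 := Nat.choose_mul (n := n) (k := j + k) (s := k) (Nat.le_add_left k j)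
  simp only [Nat.add_sub_cancel_left, Nat.add_sub_cancel] at e1 e2
  have e3 : (j + k).choose j = (j + k).choose k := by
    rw [← Nat.choose_symm (Nat.le_add_right j k)]
    congr 1
    omega
  rw [← e1, e3, e2]

lemma nat_mul_choose_sub (n k : ℕ) (hn : 1 ≤ n) :
    n * (n - 1).choose k = n.choose k * (n - k) := by
  rw [← Nat.choose_succ_right_eq]
  have h := Nat.add_one_mul_choose_eq (n - 1) k
  rw [show n - 1 + 1 = n by omega] at h
  exact h

/-- coefficient sums for the forest counts. -/
def GS (c : ℕ → ℚ) (i : ℕ) (z : ℚ) : ℚ :=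
  ∑ k ∈ range (i + 1), (i.choose k : ℚ) * c k * ab (i - k) z

lemma Estep (c : ℕ → ℚ) (n : ℕ) (z : ℚ) :
    ∑ j ∈ range (n + 1), (n.choose j : ℚ) * tq j * GS c (n - j) z
      = (n : ℚ) * GS c (n - 1) (z + 1) := by
  rcases Nat.eq_zero_or_pos n with hn | hn
  · subst hn; simp
  have step1 : ∀ j ∈ range (n + 1), (n.choose j : ℚ) * tq j * GS c (n - j) z
      = ∑ k ∈ range (n + 1 - j),
          (n.choose j : ℚ) * tq j * (((n - j).choose k : ℚ) * c k * ab (n - j - k) z) := by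
    intro j hj
    rw [GS, Finset.mul_sum, show (n - j) + 1 = n + 1 - j by
      simp only [Finset.mem_range, Nat.lt_succ_iff] at hj; omega]
  rw [Finset.sum_congr rfl step1,
    tri1 n (fun j k => (n.choose j : ℚ) * tq j * (((n - j).choose k : ℚ) * c k * ab (n - j - k) z))]
  have step2 : ∀ k ∈ range (n + 1),
      (∑ j ∈ range (n + 1 - k),
        (n.choose j : ℚ) * tq j * (((n - j).choose k : ℚ) * c k * ab (n - j - k) z))
      = (n.choose k : ℚ) * c k * (((n - k : ℕ) : ℚ) * ab (n - k - 1) (z + 1)) := by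
    intro k hk
    have hk' : k ≤ n := by simpa [Nat.lt_succ_iff] using hk
    have trans : ∀ j ∈ range (n + 1 - k),
        (n.choose j : ℚ) * tq j * (((n - j).choose k : ℚ) * c k * ab (n - j - k) z)
        = (n.choose k : ℚ) * c k * (((n - k).choose j : ℚ) * tq j * ab ((n - k) - j) z) := by
      intro j hj
      have hj' : j + k ≤ n := by simp only [Finset.mem_range] at hj; omega
      have hcoef := choose_swap hj'
      have hcoef' : ((n.choose j : ℕ) : ℚ) * ((n - j).choose k : ℚ)
          = ((n.choose k : ℕ) : ℚ) * ((n - k).choose j : ℚ) := by exact_mod_cast congrArg (Nat.cast (R := ℚ)) hcoef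
      rw [show n - j - k = n - k - j by omega]
      calc (n.choose j : ℚ) * tq j * (((n - j).choose k : ℚ) * c k * ab (n - k - j) z)
          = ((n.choose j : ℚ) * ((n - j).choose k : ℚ)) * (tq j * c k * ab (n - k - j) z) := by ring
        _ = ((n.choose k : ℚ) * ((n - k).choose j : ℚ)) * (tq j * c k * ab (n - k - j) z) := by rw [hcoef']
        _ = _ := by ring
    rw [Finset.sum_congr rfl trans, ← Finset.mul_sum,
      show n + 1 - k = (n - k) + 1 by omega, abel_deriv (n - k) z]
  rw [Finset.sum_congr rfl step2]
  obtain ⟨n', rfl⟩ : ∃ n', n = n' + 1 := ⟨n - 1, by omega⟩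
  rw [Finset.sum_range_succ]
  simp only [Nat.sub_self, Nat.cast_zero, zero_mul, mul_zero, add_zero]
  rw [GS, Finset.mul_sum, show n' + 1 - 1 = n' from rfl]
  apply Finset.sum_congr rfl
  intro k hk
  have h := nat_mul_choose_sub (n' + 1) k (by omega)
  have h' : ((n' + 1 : ℕ) : ℚ) * ((n'.choose k : ℕ) : ℚ)
      = (((n' + 1).choose k : ℕ) : ℚ) * (((n' + 1 - k : ℕ) : ℕ) : ℚ) := by
    exact_mod_cast congrArg (Nat.cast (R := ℚ)) (by simpa using h)
  rw [show n' + 1 - k - 1 = n' - k by omega]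
  calc ((n' + 1).choose k : ℚ) * c k * (((n' + 1 - k : ℕ) : ℚ) * ab (n' - k) (z + 1))
      = (((n' + 1).choose k : ℚ) * ((n' + 1 - k : ℕ) : ℚ)) * (c k * ab (n' - k) (z + 1)) := by ring
    _ = (((n' + 1 : ℕ) : ℚ) * (n'.choose k : ℚ)) * (c k * ab (n' - k) (z + 1)) := by rw [← h']
    _ = _ := by ring


lemma tq_eq (k : ℕ) (hk : 1 ≤ k) : tq k = (k : ℚ) ^ (k - 1) := by
  cases k with
  | zero => omega
  | succ k =>
    cases k with
    | zero => simp [tq, ab]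
    | succ k =>
      simp only [tq, ab, Nat.add_sub_cancel, Nat.succ_ne_zero, if_false]
      push_cast
      rw [pow_succ]
      ring

/-- the `ℚ`-valued forest count sums. -/
def Hq (m k : ℕ) : ℚ :=
  ∑ f ∈ (Finset.Nat.antidiagonalTuple m k).filter (fun f => ∀ i, 0 < f i),
    (Nat.multinomial Finset.univ f : ℚ) * ∏ i, (f i : ℚ) ^ (f i - 1)

lemma Hq_zero (m : ℕ) (hm : 1 ≤ m) : Hq m 0 = 0 := by
  rw [Hq, Finset.Nat.antidiagonalTuple_zero_right]
  rw [Finset.filter_singleton]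
  have : ¬ (∀ i : Fin m, 0 < (0 : Fin m → ℕ) i) := by
    intro h
    exact absurd (h ⟨0, by omega⟩) (by simp)
  rw [if_neg this, Finset.sum_empty]

lemma Hq_one (k : ℕ) : Hq 1 k = tq k := by
  rw [Hq, Finset.Nat.antidiagonalTuple_one, Finset.filter_singleton]
  by_cases hk : 1 ≤ k
  · have : (∀ i : Fin 1, 0 < (![k] : Fin 1 → ℕ) i) := by
      intro i
      fin_cases i <;> simpa using (show 0 < k by omega)
    rw [if_pos this, Finset.sum_singleton, tq_eq k hk]
    simp [Nat.multinomial]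
    rw [div_self (Nat.cast_ne_zero.mpr k.factorial_ne_zero), one_mul]
  · have hk0 : k = 0 := by omega
    subst hk0
    have : ¬ (∀ i : Fin 1, 0 < (![0] : Fin 1 → ℕ) i) := by
      intro h
      simpa using h 0
    rw [if_neg this, Finset.sum_empty]
    simp [tq]


lemma AT_cons_sum {M : Type*} [AddCommMonoid M] (m k : ℕ) (g : (Fin (m + 1) → ℕ) → M) :
    ∑ f ∈ Finset.Nat.antidiagonalTuple (m + 1) k, g f
      = ∑ j ∈ range (k + 1), ∑ f ∈ Finset.Nat.antidiagonalTuple m (k - j), g (Fin.cons j f) := by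
  rw [Finset.sum_sigma']
  refine Finset.sum_nbij' (i := fun f : Fin (m + 1) → ℕ => (⟨f 0, Fin.tail f⟩ : Σ _j : ℕ, (Fin m → ℕ)))
    (j := fun p : Σ _j : ℕ, (Fin m → ℕ) => Fin.cons p.1 p.2) ?_ ?_ ?_ ?_ ?_
  · intro f hf
    rw [Finset.Nat.mem_antidiagonalTuple] at hf
    rw [Finset.mem_sigma]
    constructor
    · rw [Finset.mem_range, Nat.lt_succ_iff, ← hf]
      exact Finset.single_le_sum (fun i _ => Nat.zero_le _) (Finset.mem_univ 0)
    · rw [Finset.Nat.mem_antidiagonalTuple]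
      have hsum : f 0 + ∑ i : Fin m, Fin.tail f i = k := by
        rw [← hf, Fin.sum_univ_succ]
        rfl
      exact Nat.eq_sub_of_add_eq' hsum
  · intro p hp
    rw [Finset.mem_sigma, Finset.mem_range, Nat.lt_succ_iff,
      Finset.Nat.mem_antidiagonalTuple] at hp
    rw [Finset.Nat.mem_antidiagonalTuple, Fin.sum_cons, hp.2]
    omega
  · intro f _
    exact Fin.cons_self_tail f
  · intro p _
    refine Sigma.ext rfl (heq_of_eq ?_)
    simp only [Fin.cons_zero]
    exact Fin.tail_cons _ _
  · intro f _
    rw [Fin.cons_self_tail]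

lemma multinomial_q {α : Type*} (s : Finset α) (f : α → ℕ) :
    (Nat.multinomial s f : ℚ) = (Nat.factorial (∑ i ∈ s, f i) : ℚ) / ∏ i ∈ s, (Nat.factorial (f i) : ℚ) := by
  rw [eq_div_iff]
  · rw [mul_comm]
    exact_mod_cast congrArg (Nat.cast (R := ℚ)) (Nat.multinomial_spec s f)
  · apply Finset.prod_ne_zero_iff.mpr
    intro i _
    exact Nat.cast_ne_zero.mpr (Nat.factorial_ne_zero _)

lemma multinomial_cons_q (m j : ℕ) (f : Fin m → ℕ) :
    (Nat.multinomial (univ : Finset (Fin (m + 1))) (Fin.cons j f) : ℚ)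
      = ((Nat.choose (j + ∑ i, f i) j : ℕ) : ℚ) * (Nat.multinomial (univ : Finset (Fin m)) f : ℚ) := by
  rw [multinomial_q, multinomial_q, Fin.sum_cons, Fin.prod_univ_succ]
  simp only [Fin.cons_zero, Fin.cons_succ]
  have hch : ((Nat.choose (j + ∑ i, f i) j : ℕ) : ℚ) * (Nat.factorial j : ℚ) * (Nat.factorial (∑ i, f i) : ℚ)
      = (Nat.factorial (j + ∑ i, f i) : ℚ) := by
    have := Nat.choose_mul_factorial_mul_factorial (Nat.le_add_right j (∑ i, f i))
    rw [Nat.add_sub_cancel_left] at this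
    exact_mod_cast congrArg (Nat.cast (R := ℚ)) this
  rw [← hch]
  have h1 : (Nat.factorial j : ℚ) ≠ 0 := Nat.cast_ne_zero.mpr (Nat.factorial_ne_zero _)
  have h2 : (∏ i, (Nat.factorial (f i) : ℚ)) ≠ 0 := by
    apply Finset.prod_ne_zero_iff.mpr
    intro i _
    exact Nat.cast_ne_zero.mpr (Nat.factorial_ne_zero _)
  field_simp


lemma H_split (m k : ℕ) :
    Hq (m + 1) k = ∑ j ∈ range (k + 1), (k.choose j : ℚ) * tq j * Hq m (k - j) := by
  rw [Hq, Finset.sum_filter, AT_cons_sum m k]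
  apply Finset.sum_congr rfl
  intro j hj
  have hj' : j ≤ k := by simpa [Nat.lt_succ_iff] using hj
  by_cases h0 : j = 0
  · subst h0
    have hneg : ∀ f : Fin m → ℕ, ¬(∀ i, 0 < (Fin.cons 0 f : Fin (m+1) → ℕ) i) := by
      intro f h
      simpa using h 0
    simp [hneg, tq_zero]
  · have h1 : 1 ≤ j := by omega
    have hiff : ∀ f : Fin m → ℕ, (∀ i, 0 < (Fin.cons j f : Fin (m+1) → ℕ) i) ↔ (∀ i, 0 < f i) := by
      intro f
      constructor
      · intro h i
        simpa using h i.succ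
      · intro hf i
        refine Fin.cases ?_ ?_ i
        · simpa using (show 0 < j by omega)
        · intro i'
          simpa using hf i'
    have hconv : ∀ f : Fin m → ℕ,
        (if (∀ i, 0 < (Fin.cons j f : Fin (m+1) → ℕ) i)
          then (Nat.multinomial Finset.univ (Fin.cons j f) : ℚ)
            * ∏ i, ((Fin.cons j f : Fin (m+1) → ℕ) i : ℚ) ^ ((Fin.cons j f : Fin (m+1) → ℕ) i - 1)
          else 0)
        = (if (∀ i, 0 < f i)
          then (Nat.multinomial Finset.univ (Fin.cons j f) : ℚ)
            * ∏ i, ((Fin.cons j f : Fin (m+1) → ℕ) i : ℚ) ^ ((Fin.cons j f : Fin (m+1) → ℕ) i - 1)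
          else 0) := by
      intro f
      rw [if_congr (hiff f) rfl rfl]
    rw [Finset.sum_congr rfl (fun f _ => hconv f), ← Finset.sum_filter]
    have hterm : ∀ f ∈ (Finset.Nat.antidiagonalTuple m (k - j)).filter (fun f => ∀ i, 0 < f i),
        (Nat.multinomial Finset.univ (Fin.cons j f) : ℚ)
          * ∏ i, ((Fin.cons j f : Fin (m+1) → ℕ) i : ℚ) ^ ((Fin.cons j f : Fin (m+1) → ℕ) i - 1)
        = (k.choose j : ℚ) * tq j
            * ((Nat.multinomial Finset.univ f : ℚ) * ∏ i, (f i : ℚ) ^ (f i - 1)) := by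
      intro f hf
      rw [Finset.mem_filter, Finset.Nat.mem_antidiagonalTuple] at hf
      rw [multinomial_cons_q, hf.1]
      rw [show j + (k - j) = k by omega]
      rw [Fin.prod_univ_succ]
      simp only [Fin.cons_zero, Fin.cons_succ]
      rw [tq_eq j h1]
      ring
    rw [Finset.sum_congr rfl hterm, ← Finset.mul_sum, Hq]


lemma keyD (m : ℕ) (hm : 1 ≤ m) (n : ℕ) (z : ℚ) :
    GS (Hq m) n z = (n.descFactorial m : ℚ) * ab (n - m) (z + m) := by
  induction m, hm using Nat.le_induction generalizing n z with
  | base =>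
    rw [GS]
    have h : ∀ k ∈ range (n + 1), (n.choose k : ℚ) * Hq 1 k * ab (n - k) z
        = (n.choose k : ℚ) * tq k * ab (n - k) z := by
      intro k _
      rw [Hq_one]
    rw [Finset.sum_congr rfl h, abel_deriv n z, Nat.descFactorial_one]
    push_cast
    ring_nf
  | succ m hm ih =>
    rw [GS]
    have h1 : ∀ k ∈ range (n + 1), (n.choose k : ℚ) * Hq (m + 1) k * ab (n - k) z
        = ∑ j ∈ range (k + 1),
            (n.choose k : ℚ) * ((k.choose j : ℚ) * tq j * Hq m (k - j)) * ab (n - k) z := by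
      intro k _
      rw [H_split, Finset.mul_sum, Finset.sum_mul]
    rw [Finset.sum_congr rfl h1,
      tri2 n (fun j k => (n.choose k : ℚ) * ((k.choose j : ℚ) * tq j * Hq m (k - j)) * ab (n - k) z)]
    have h2 : ∀ j ∈ range (n + 1),
        (∑ i ∈ range (n + 1 - j),
          (n.choose (j + i) : ℚ) * (((j + i).choose j : ℚ) * tq j * Hq m ((j + i) - j))
            * ab (n - (j + i)) z)
        = (n.choose j : ℚ) * tq j * GS (Hq m) (n - j) z := by
      intro j hj
      have hj' : j ≤ n := by simpa [Nat.lt_succ_iff] using hj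
      rw [GS, Finset.mul_sum, show (n - j) + 1 = n + 1 - j by omega]
      apply Finset.sum_congr rfl
      intro i hi
      have hi' : j + i ≤ n := by simp only [Finset.mem_range] at hi; omega
      have hcoef := Nat.choose_mul (n := n) (k := j + i) (s := j) (Nat.le_add_right j i)
      rw [Nat.add_sub_cancel_left] at hcoef
      have hcoef' : ((n.choose (j + i) : ℕ) : ℚ) * (((j + i).choose j : ℕ) : ℚ)
          = ((n.choose j : ℕ) : ℚ) * (((n - j).choose i : ℕ) : ℚ) := by
        exact_mod_cast congrArg (Nat.cast (R := ℚ)) hcoef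
      rw [Nat.add_sub_cancel_left, show n - (j + i) = n - j - i by omega]
      calc (n.choose (j + i) : ℚ) * (((j + i).choose j : ℚ) * tq j * Hq m i) * ab (n - j - i) z
          = ((n.choose (j + i) : ℚ) * ((j + i).choose j : ℚ)) * (tq j * Hq m i * ab (n - j - i) z) := by
            ring
        _ = ((n.choose j : ℚ) * ((n - j).choose i : ℚ)) * (tq j * Hq m i * ab (n - j - i) z) := by
            rw [hcoef']
        _ = _ := by ring
    rw [Finset.sum_congr rfl h2, Estep (Hq m) n z, ih (n - 1) (z + 1)]
    have hd : (n : ℚ) * ((n - 1).descFactorial m : ℚ) = (n.descFactorial (m + 1) : ℚ) := by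
      cases n with
      | zero => simp
      | succ n' =>
        rw [Nat.succ_descFactorial_succ]
        push_cast [Nat.succ_sub_one]
        ring
    rw [show n - 1 - m = n - (m + 1) by omega]
    push_cast
    push_cast at hd
    rw [← mul_assoc, hd]
    ring_nf


/-- For `1 ≤ m ≤ ℓ`, summing over ordered `m`-tuples of positive integers with sum `ℓ`:
`∑ (ℓ! / (f_1! ⋯ f_m!)) f_1^(f_1-1) ⋯ f_m^(f_m-1) = m! C(ℓ-1, m-1) ℓ^(ℓ-m)`. -/
theorem stmt_12 (ℓ m : ℕ) (hm : 1 ≤ m) (hmℓ : m ≤ ℓ) :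
    ∑ f ∈ (Finset.Nat.antidiagonalTuple m ℓ).filter (fun f => ∀ i, 0 < f i),
      Nat.multinomial Finset.univ f * ∏ i, f i ^ (f i - 1)
    = m.factorial * (ℓ - 1).choose (m - 1) * ℓ ^ (ℓ - m) := by
  have key : Hq m ℓ = ((m.factorial * (ℓ - 1).choose (m - 1) * ℓ ^ (ℓ - m) : ℕ) : ℚ) := by
    have h1 : GS (Hq m) ℓ 0 = Hq m ℓ := by
      rw [GS]
      rw [Finset.sum_eq_single ℓ]
      · rw [Nat.choose_self, Nat.sub_self, ab_apply_zero]
        simp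
      · intro k hk hne
        rw [ab_apply_zero, if_neg (by simp only [Finset.mem_range] at hk; omega)]
        ring
      · intro h
        exact absurd (Finset.self_mem_range_succ ℓ) h
    rw [← h1, keyD m hm ℓ 0, zero_add]
    rcases Nat.lt_or_ge m ℓ with hlt | hge
    · have hne : ℓ - m ≠ 0 := by omega
      rw [ab, if_neg hne]
      have hcast : ((m : ℚ) + ((ℓ - m : ℕ) : ℚ)) = (ℓ : ℚ) := by
        push_cast [Nat.cast_sub hmℓ]
        ring
      rw [hcast]
      have hnat : ℓ.descFactorial m * m * ℓ ^ (ℓ - m - 1)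
          = m.factorial * (ℓ - 1).choose (m - 1) * ℓ ^ (ℓ - m) := by
        have e1 : ℓ.descFactorial m = ℓ * (ℓ - 1).descFactorial (m - 1) := by
          have := Nat.succ_descFactorial_succ (ℓ - 1) (m - 1)
          rw [show ℓ - 1 + 1 = ℓ by omega, show m - 1 + 1 = m by omega] at this
          exact this
        have e2 : (ℓ - 1).descFactorial (m - 1) = (m - 1).factorial * (ℓ - 1).choose (m - 1) :=
          Nat.descFactorial_eq_factorial_mul_choose _ _
        have e3 : m.factorial = m * (m - 1).factorial := by
          have := Nat.factorial_succ (m - 1)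
          rw [show m - 1 + 1 = m by omega] at this
          exact this
        have e4 : ℓ ^ (ℓ - m) = ℓ * ℓ ^ (ℓ - m - 1) := by
          rw [← pow_succ']
          congr 1
          omega
        rw [e1, e2, e3, e4]
        ring
      push_cast [← hnat]
      ring
    · have heq : ℓ = m := by omega
      subst heq
      rw [Nat.sub_self]
      simp only [ab, if_pos rfl, mul_one, Nat.descFactorial_self, Nat.choose_self, pow_zero]
      push_cast
      ring
  have hcast : ((∑ f ∈ (Finset.Nat.antidiagonalTuple m ℓ).filter (fun f => ∀ i, 0 < f i),
      Nat.multinomial Finset.univ f * ∏ i, f i ^ (f i - 1) : ℕ) : ℚ) = Hq m ℓ := by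
    rw [Hq]
    push_cast
    rfl
  exact_mod_cast hcast.trans key

end
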